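/- Let q₁, q₂ be coprime odd squarefree positive integers. Let q̄₁ be an integer with q̄₁ q₁ ≡ 1 (mod q₂) and q̄₂ an integer with q̄₂ q₂ ≡ 1 (mod q₁). Then for every integer w: H(w; q₁ q₂) = H(w q̄₁; q₂) · H(w q̄₂; q₁), where the left-hand sum uses the Jacobi symbol χ_{q₁ q₂} and the two right-hand sums use χ_{q₂} and χ_{q₁} respectively. -/

import Mathlib

/-- `e_c(x) = exp(2πix/c)`. -/
noncomputable def ec (c : ℕ) (x : ℤ) : ℂ :=
  Complex.exp (2 * Real.pi * Complex.I * x / c)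

/-- The Kloosterman sum `S(m, n; c) = Σ_{a d ≡ 1 (mod c)} e_c(a m + d n)`. -/
noncomputable def kloos (m n : ℤ) (c : ℕ) : ℂ :=
  ∑ a ∈ Finset.range c, ∑ d ∈ Finset.range c,
    if (a * d) % c = 1 % c then ec c (a * m + d * n) else 0

/-- `G(m, m₁, m₂; c)` : complete sum of Kloosterman sums twisted by `χ_q`, for `q ∣ c`. -/
noncomputable def Gsum (q : ℕ) (m m1 m2 : ℤ) (c : ℕ) : ℂ :=
  ∑ a ∈ Finset.range c, ∑ a1 ∈ Finset.range c, ∑ a2 ∈ Finset.range c,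
    (jacobiSym ((a : ℤ) * a1 * a2) q : ℂ) * kloos a ((a1 : ℤ) * a2) c *
      ec c (a * m + a1 * m1 + a2 * m2)

/-- `G'(m, m₁, m₂; c) = e_c(−m m₁ m₂) G(m, m₁, m₂; c)`. -/
noncomputable def Gsum' (q : ℕ) (m m1 m2 : ℤ) (c : ℕ) : ℂ :=
  ec c (-(m * m1 * m2)) * Gsum q m m1 m2 c

/-- `H_r(m, m₁, m₂; q) = Σ_{u,v mod q} χ_q(v (u + v m₁)(v r − m)(u r + m m₁)) e_q(u m₂)`. -/
noncomputable def Hr (r m m1 m2 : ℤ) (q : ℕ) : ℂ :=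
  ∑ u ∈ Finset.range q, ∑ v ∈ Finset.range q,
    (jacobiSym ((v : ℤ) * ((u : ℤ) + v * m1) * ((v : ℤ) * r - m) * ((u : ℤ) * r + m * m1)) q : ℂ) *
      ec q (u * m2)

/-- `H(w; q) = Σ_{u,v mod q} χ_q(u v (u+1)(v+1)) e_q((u v − 1) w)`. -/
noncomputable def Hw (w : ℤ) (q : ℕ) : ℂ :=
  ∑ u ∈ Finset.range q, ∑ v ∈ Finset.range q,
    (jacobiSym ((u : ℤ) * v * ((u : ℤ) + 1) * ((v : ℤ) + 1)) q : ℂ) *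
      ec q (((u : ℤ) * v - 1) * w)

/-- Reduced sum `H*(w; q)`, restricted by `gcd(uv − 1, q) = 1`. -/
noncomputable def Hstar (w : ℤ) (q : ℕ) : ℂ :=
  ∑ u ∈ Finset.range q, ∑ v ∈ Finset.range q,
    if Int.gcd ((u : ℤ) * v - 1) q = 1 then
      (jacobiSym ((u : ℤ) * v * ((u : ℤ) + 1) * ((v : ℤ) + 1)) q : ℂ) *
        ec q (((u : ℤ) * v - 1) * w)
    else 0

/-- The Ramanujan sum `R(n; k) = Σ_{d mod k, (d,k)=1} e_k(d n)`. -/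
noncomputable def Ram (n : ℤ) (k : ℕ) : ℂ :=
  ∑ d ∈ Finset.range k, if Nat.gcd d k = 1 then ec k (d * n) else 0

/-- The Gauss sum `τ(χ_q) = Σ_{x mod q} χ_q(x) e_q(x)`. -/
noncomputable def gaussτ (q : ℕ) : ℂ :=
  ∑ x ∈ Finset.range q, (jacobiSym (x : ℤ) q : ℂ) * ec q (x : ℤ)

lemma ec_congr {q : ℕ} (hq : 0 < q) {x y : ℤ} (h : x ≡ y [ZMOD q]) : ec q x = ec q y := by
  obtain ⟨k, hk⟩ := Int.ModEq.dvd h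
  have hx : x = y - q * k := by linarith [hk]
  subst hx
  unfold ec
  push_cast
  have hq' : (q : ℂ) ≠ 0 := Nat.cast_ne_zero.mpr hq.ne'
  have harg : 2 * (Real.pi:ℂ) * Complex.I * ((y:ℂ) - (q:ℂ) * k) / q
      = 2 * (Real.pi:ℂ) * Complex.I * (y:ℂ) / q + ((-k : ℤ) : ℂ) * (2 * Real.pi * Complex.I) := by
    field_simp
    push_cast
    ring
  rw [harg, Complex.exp_add, Complex.exp_int_mul_two_pi_mul_I, mul_one]

lemma ec_split {q1 q2 : ℕ} (h1 : 0 < q1) (h2 : 0 < q2) (hco : Nat.Coprime q1 q2)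
    {qb1 qb2 : ℤ} (hqb1 : (q2 : ℤ) ∣ (qb1 * q1 - 1)) (hqb2 : (q1 : ℤ) ∣ (qb2 * q2 - 1))
    (x : ℤ) : ec (q1 * q2) x = ec q2 (x * qb1) * ec q1 (x * qb2) := by
  have key : ec (q1*q2) (x * qb1 * q1 + x * qb2 * q2) = ec q2 (x * qb1) * ec q1 (x * qb2) := by
    unfold ec
    rw [← Complex.exp_add]
    congr 1
    have h1' : (q1 : ℂ) ≠ 0 := Nat.cast_ne_zero.mpr h1.ne'
    have h2' : (q2 : ℂ) ≠ 0 := Nat.cast_ne_zero.mpr h2.ne'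
    field_simp
    push_cast
    ring
  rw [← key]
  apply ec_congr (Nat.mul_pos h1 h2)
  have hdvd : ((q1 * q2 : ℕ) : ℤ) ∣ (qb1 * q1 + qb2 * q2 - 1) := by
    have hc : IsCoprime (q1 : ℤ) (q2 : ℤ) := Int.isCoprime_iff_gcd_eq_one.mpr hco
    push_cast
    refine IsCoprime.mul_dvd hc ?_ ?_
    · have e : qb1 * q1 + qb2 * q2 - 1 = qb1 * q1 + (qb2 * q2 - 1) := by ring
      rw [e]; exact dvd_add (dvd_mul_left _ _) hqb2
    · have e : qb1 * q1 + qb2 * q2 - 1 = (qb1 * q1 - 1) + qb2 * q2 := by ring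
      rw [e]; exact dvd_add hqb1 (dvd_mul_left _ _)
  have hd2 : ((q1 * q2 : ℕ) : ℤ) ∣ ((x * qb1 * q1 + x * qb2 * q2) - x) := by
    have : (x * qb1 * q1 + x * qb2 * q2) - x = x * (qb1 * q1 + qb2 * q2 - 1) := by ring
    rw [this]
    exact Dvd.dvd.mul_left hdvd _
  exact (Int.modEq_iff_dvd.mpr hd2)

lemma sum_range_zmod (q : ℕ) [NeZero q] (f : ℕ → ℂ) :
    ∑ i ∈ Finset.range q, f i = ∑ x : ZMod q, f x.val := by
  rw [Finset.sum_range]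
  refine Fintype.sum_bijective (fun i : Fin q => (i.val : ZMod q)) ?_ _ _ ?_
  · constructor
    · intro a b hab
      have := congrArg ZMod.val hab
      rwa [ZMod.val_cast_of_lt a.isLt, ZMod.val_cast_of_lt b.isLt, Fin.val_inj] at this
    · intro x
      exact ⟨⟨x.val, ZMod.val_lt x⟩, by simp [ZMod.natCast_val, ZMod.cast_id]⟩
  · intro i
    rw [ZMod.val_cast_of_lt i.isLt]

lemma crt_comp {q1 q2 : ℕ} (h1 : 0 < q1) (h2 : 0 < q2) (hco : Nat.Coprime q1 q2)
    (p : ZMod q1 × ZMod q2) :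
    (((ZMod.chineseRemainder hco).symm p).val : ℤ) ≡ (p.1.val : ℤ) [ZMOD q1] ∧
    (((ZMod.chineseRemainder hco).symm p).val : ℤ) ≡ (p.2.val : ℤ) [ZMOD q2] := by
  haveI : NeZero (q1 * q2) := ⟨(Nat.mul_pos h1 h2).ne'⟩
  haveI : NeZero q1 := ⟨h1.ne'⟩
  haveI : NeZero q2 := ⟨h2.ne'⟩
  set u := (ZMod.chineseRemainder hco).symm p with hu
  have he : (ZMod.chineseRemainder hco) u = p := (ZMod.chineseRemainder hco).apply_symm_apply p
  have hunat : u = ((u.val : ℕ) : ZMod (q1 * q2)) := by rw [ZMod.natCast_val, ZMod.cast_id]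
  have h1' : ((u.val : ZMod q1), (u.val : ZMod q2)) = p := by
    conv_rhs => rw [← he, hunat]
    rw [map_natCast]
    exact Prod.ext rfl rfl
  constructor
  · rw [← ZMod.intCast_eq_intCast_iff]
    push_cast
    exact (congrArg Prod.fst h1').trans ((ZMod.natCast_val p.1).trans (ZMod.cast_id _ _)).symm
  · rw [← ZMod.intCast_eq_intCast_iff]
    push_cast
    exact (congrArg Prod.snd h1').trans ((ZMod.natCast_val p.2).trans (ZMod.cast_id _ _)).symm

lemma prod_split {α β : Type*} [Fintype α] [Fintype β] (A : β → β → ℂ) (B : α → α → ℂ) :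
    ∑ p : α × β, ∑ r : α × β, A p.2 r.2 * B p.1 r.1
      = (∑ x : β, ∑ y : β, A x y) * (∑ x : α, ∑ y : α, B x y) := by
  have inner : ∀ p : α × β, ∑ r : α × β, A p.2 r.2 * B p.1 r.1
      = (∑ y : β, A p.2 y) * (∑ y : α, B p.1 y) := by
    intro p
    rw [Fintype.sum_prod_type, Fintype.sum_mul_sum]
    exact Finset.sum_comm
  simp_rw [inner]
  rw [Fintype.sum_prod_type]
  conv_rhs => rw [Fintype.sum_mul_sum]
  exact Finset.sum_comm

lemma Hw_zmod (w : ℤ) (q : ℕ) [NeZero q] :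
    Hw w q = ∑ u : ZMod q, ∑ v : ZMod q,
      (jacobiSym ((u.val : ℤ) * v.val * ((u.val : ℤ) + 1) * ((v.val : ℤ) + 1)) q : ℂ) *
        ec q (((u.val : ℤ) * v.val - 1) * w) := by
  unfold Hw
  rw [sum_range_zmod]
  exact Finset.sum_congr rfl fun x _ => sum_range_zmod q _

set_option maxHeartbeats 1000000 in
/-- twisted multiplicativity of `H(w; q)` in the modulus: for coprime odd
squarefree `q₁, q₂`, `H(w; q₁ q₂) = H(w q̄₁; q₂) ⬝ H(w q̄₂; q₁)`. -/
theorem Hw_mul (q1 q2 : ℕ) (h1 : 0 < q1) (h2 : 0 < q2) (hodd1 : Odd q1) (hodd2 : Odd q2)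
    (hsf1 : Squarefree q1) (hsf2 : Squarefree q2) (hco : Nat.Coprime q1 q2)
    (qb1 qb2 : ℤ) (hqb1 : (q2 : ℤ) ∣ (qb1 * q1 - 1)) (hqb2 : (q1 : ℤ) ∣ (qb2 * q2 - 1))
    (w : ℤ) :
    Hw w (q1 * q2) = Hw (w * qb1) q2 * Hw (w * qb2) q1 := by
  haveI : NeZero q1 := ⟨h1.ne'⟩
  haveI : NeZero q2 := ⟨h2.ne'⟩
  haveI : NeZero (q1 * q2) := ⟨(Nat.mul_pos h1 h2).ne'⟩
  rw [Hw_zmod, Hw_zmod, Hw_zmod]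
  set e := (ZMod.chineseRemainder hco).toEquiv with he
  rw [← Equiv.sum_comp e.symm]
  have step : ∀ p : ZMod q1 × ZMod q2,
      (∑ v : ZMod (q1 * q2),
        (jacobiSym (((e.symm p).val : ℤ) * v.val * (((e.symm p).val : ℤ) + 1) * ((v.val : ℤ) + 1))
          (q1 * q2) : ℂ) * ec (q1 * q2) ((((e.symm p).val : ℤ) * v.val - 1) * w))
      = ∑ r : ZMod q1 × ZMod q2,
        ((jacobiSym ((p.2.val : ℤ) * r.2.val * ((p.2.val : ℤ) + 1) * ((r.2.val : ℤ) + 1)) q2 : ℂ) *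
          ec q2 (((p.2.val : ℤ) * r.2.val - 1) * (w * qb1))) *
        ((jacobiSym ((p.1.val : ℤ) * r.1.val * ((p.1.val : ℤ) + 1) * ((r.1.val : ℤ) + 1)) q1 : ℂ) *
          ec q1 (((p.1.val : ℤ) * r.1.val - 1) * (w * qb2))) := by
    intro p
    rw [← Equiv.sum_comp e.symm]
    refine Finset.sum_congr rfl fun r _ => ?_
    obtain ⟨hu1, hu2⟩ := crt_comp h1 h2 hco p
    obtain ⟨hv1, hv2⟩ := crt_comp h1 h2 hco r
    set U : ℤ := ((e.symm p).val : ℤ)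
    set V : ℤ := ((e.symm r).val : ℤ)
    have hN1 : U * V * (U + 1) * (V + 1)
        ≡ (p.1.val : ℤ) * r.1.val * ((p.1.val : ℤ) + 1) * ((r.1.val : ℤ) + 1) [ZMOD q1] :=
      (((hu1.mul hv1).mul (hu1.add_right 1)).mul (hv1.add_right 1))
    have hN2 : U * V * (U + 1) * (V + 1)
        ≡ (p.2.val : ℤ) * r.2.val * ((p.2.val : ℤ) + 1) * ((r.2.val : ℤ) + 1) [ZMOD q2] :=
      (((hu2.mul hv2).mul (hu2.add_right 1)).mul (hv2.add_right 1))
    have hjac : (jacobiSym (U * V * (U + 1) * (V + 1)) (q1 * q2) : ℂ)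
        = (jacobiSym ((p.1.val : ℤ) * r.1.val * ((p.1.val : ℤ) + 1) * ((r.1.val : ℤ) + 1)) q1 : ℂ)
        * (jacobiSym ((p.2.val : ℤ) * r.2.val * ((p.2.val : ℤ) + 1) * ((r.2.val : ℤ) + 1)) q2
            : ℂ) := by
      rw [jacobiSym.mul_right, jacobiSym.mod_left' hN1, jacobiSym.mod_left' hN2]
      push_cast
      ring
    have hec : ec (q1 * q2) ((U * V - 1) * w)
        = ec q2 (((p.2.val : ℤ) * r.2.val - 1) * (w * qb1)) *
          ec q1 (((p.1.val : ℤ) * r.1.val - 1) * (w * qb2)) := by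
      rw [ec_split h1 h2 hco hqb1 hqb2]
      congr 1
      · apply ec_congr h2
        calc (U * V - 1) * w * qb1 = (U * V - 1) * (w * qb1) := by ring
          _ ≡ ((p.2.val : ℤ) * r.2.val - 1) * (w * qb1) [ZMOD q2] :=
            ((hu2.mul hv2).sub_right 1).mul_right _
      · apply ec_congr h1
        calc (U * V - 1) * w * qb2 = (U * V - 1) * (w * qb2) := by ring
          _ ≡ ((p.1.val : ℤ) * r.1.val - 1) * (w * qb2) [ZMOD q1] :=
            ((hu1.mul hv1).sub_right 1).mul_right _
    rw [hjac, hec]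
    ring
  rw [Fintype.sum_congr _ _ step]
  exact prod_split (α := ZMod q1) (β := ZMod q2)
      (fun x y => (jacobiSym ((x.val : ℤ) * y.val * ((x.val : ℤ) + 1) * ((y.val : ℤ) + 1)) q2 : ℂ) *
        ec q2 (((x.val : ℤ) * y.val - 1) * (w * qb1)))
      (fun x y => (jacobiSym ((x.val : ℤ) * y.val * ((x.val : ℤ) + 1) * ((y.val : ℤ) + 1)) q1 : ℂ) *
        ec q1 (((x.val : ℤ) * y.val - 1) * (w * qb2)))
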